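/- For all x ≥ 0 and α ≥ 1/√6, the function f(x) = x·log(x) − x·log(α + x) + α − 1/(12(α + x)) is nonnegative (with the convention 0·log 0 = 0). -/
import Mathlib


open Real

theorem stmt_0 (x α : ℝ) (hx : 0 ≤ x) (hα : 1 / Real.sqrt 6 ≤ α) :
    0 ≤ x * Real.log x - x * Real.log (α + x) + α - 1 / (12 * (α + x)) := by
  have h6 : (0:ℝ) < Real.sqrt 6 := Real.sqrt_pos.mpr (by norm_num)
  have h6sq : Real.sqrt 6 ^ 2 = 6 := Real.sq_sqrt (by norm_num)
  have hα0 : 0 < α := lt_of_lt_of_le (by positivity) hα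
  have hα2 : 1 / 6 ≤ α ^ 2 := by
    have h1 : (1 / Real.sqrt 6) ^ 2 ≤ α ^ 2 := by
      apply pow_le_pow_left₀ (by positivity) hα
    calc (1:ℝ)/6 = (1 / Real.sqrt 6) ^ 2 := by
          rw [div_pow, h6sq]; norm_num
      _ ≤ α ^ 2 := h1
  rcases eq_or_lt_of_le hx with h0 | hx0
  · rw [← h0]
    simp only [zero_mul, add_zero, sub_zero, zero_sub]
    have : 1 / (12 * α) ≤ α := by
      rw [div_le_iff₀ (by positivity)]
      nlinarith
    linarith
  · have hs : 0 < α + x := by linarith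
    have hy : 1 < (α + x) / x := (one_lt_div hx0).mpr (by linarith)
    have hlog : Real.log ((α + x) / x) < ((α + x) / x - ((α + x) / x)⁻¹) / 2 := by
      have := Real.self_lt_sinh_iff.mpr (Real.log_pos hy)
      rwa [Real.sinh_log (by positivity)] at this
    rw [Real.log_div (by positivity) (ne_of_gt hx0)] at hlog
    have hinv : ((α + x) / x)⁻¹ = x / (α + x) := by
      rw [inv_div]
    rw [hinv] at hlog
    have key : x * (Real.log (α + x) - Real.log x) ≤ x * (((α + x) / x - x / (α + x)) / 2) :=
      mul_le_mul_of_nonneg_left (le_of_lt hlog) hx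
    have hexp : x * (((α + x) / x - x / (α + x)) / 2) = α - α ^ 2 / (2 * (α + x)) := by
      field_simp
      ring
    rw [hexp] at key
    have h1 : 1 / (12 * (α + x)) ≤ α ^ 2 / (2 * (α + x)) := by
      rw [div_le_div_iff₀ (by positivity) (by positivity)]
      nlinarith
    rw [mul_sub] at key
    linarith
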